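/- Distributivity of the lattice of bands (Section 6.1): Let E be a vector lattice (a lattice-ordered real vector space). For all bands L, K, N of E (i.e., sets of the form M^⊥) one has L ∩ (K ∪ N)^⊥⊥ = ((L ∩ K) ∪ (L ∩ N))^⊥⊥; i.e., the inclusion-ordered set B(E) of bands, with meet L ∧ K = L ∩ K and join L ∨ K = (L ∪ K)^⊥⊥, is a distributive lattice. -/
import Mathlib


/-- The disjoint complement `M^⊥` of a subset `M` of a vector lattice. -/
def disjComp {E : Type*} [Lattice E] [AddCommGroup E] (M : Set E) : Set E :=
  {x : E | ∀ y ∈ M, |x| ⊓ |y| = 0}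

/-- A band of a vector lattice: a set of the form `M^⊥`. -/
def IsBand {E : Type*} [Lattice E] [AddCommGroup E] (L : Set E) : Prop :=
  ∃ M : Set E, L = disjComp M

section Aux

variable {E : Type*} [Lattice E] [AddCommGroup E]
  [CovariantClass E E (· + ·) (· ≤ ·)]

lemma disjComp_anti {A B : Set E} (h : A ⊆ B) : disjComp B ⊆ disjComp A :=
  fun x hx y hy => hx y (h hy)

lemma subset_disjComp_disjComp (A : Set E) : A ⊆ disjComp (disjComp A) := by
  intro x hx y hy
  rw [inf_comm]
  exact hy x hx

lemma disjComp_union (A B : Set E) :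
    disjComp (A ∪ B) = disjComp A ∩ disjComp B := by
  ext x
  constructor
  · intro hx
    exact ⟨fun y hy => hx y (Or.inl hy), fun y hy => hx y (Or.inr hy)⟩
  · rintro ⟨h1, h2⟩ y (hy | hy)
    · exact h1 y hy
    · exact h2 y hy

lemma disjComp_solid {M : Set E} {x z : E} (hx : x ∈ disjComp M) (hz : |z| ≤ |x|) :
    z ∈ disjComp M := by
  intro y hy
  refine le_antisymm ?_ (le_inf (abs_nonneg z) (abs_nonneg y))
  calc |z| ⊓ |y| ≤ |x| ⊓ |y| := inf_le_inf_right _ hz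
    _ = 0 := hx y hy

lemma disjComp_triple (M : Set E) :
    disjComp (disjComp (disjComp M)) = disjComp M :=
  le_antisymm (disjComp_anti (subset_disjComp_disjComp M))
    (subset_disjComp_disjComp (disjComp M))

end Aux

/-- Distributivity of the lattice of bands (Section 6.1): in a vector lattice `E`, for
all bands `L`, `K`, `N` one has `L ∩ (K ∪ N)^⊥⊥ = ((L ∩ K) ∪ (L ∩ N))^⊥⊥`; i.e. the
lattice of bands, with meet the intersection and join `(L ∪ K)^⊥⊥`, is distributive. -/
theorem band_lattice_distrib {E : Type*} [Lattice E] [AddCommGroup E] [Module ℝ E]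
    [CovariantClass E E (· + ·) (· ≤ ·)] [PosSMulMono ℝ E]
    (L K N : Set E) (hL : IsBand L) (hK : IsBand K) (hN : IsBand N) :
    L ∩ disjComp (disjComp (K ∪ N)) =
      disjComp (disjComp ((L ∩ K) ∪ (L ∩ N))) := by
  obtain ⟨ML, rfl⟩ := hL
  obtain ⟨MK, hKeq⟩ := hK
  obtain ⟨MN, hNeq⟩ := hN
  set L := disjComp ML with hLdef
  apply le_antisymm
  · -- hard direction
    intro x ⟨hxL, hxKN⟩ y hy
    -- hy : y ∈ disjComp ((L ∩ K) ∪ (L ∩ N))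
    set z := |x| ⊓ |y| with hzdef
    have hz0 : 0 ≤ z := le_inf (abs_nonneg x) (abs_nonneg y)
    have hzabs : |z| = z := abs_of_nonneg hz0
    have hzx : |z| ≤ |x| := by rw [hzabs]; exact inf_le_left
    have hzy : |z| ≤ |y| := by rw [hzabs]; exact inf_le_right
    have hzL : z ∈ L := disjComp_solid hxL hzx
    have hzKN : z ∈ disjComp (disjComp (K ∪ N)) := disjComp_solid hxKN hzx
    have hzperp : z ∈ disjComp ((L ∩ K) ∪ (L ∩ N)) := disjComp_solid hy hzy
    -- z is disjoint from K and from N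
    have key : ∀ (P : Set E), P = K ∨ P = N → ∀ k ∈ P, |z| ⊓ |k| = 0 := by
      intro P hP k hk
      set w := z ⊓ |k| with hwdef
      have hw0 : 0 ≤ w := le_inf hz0 (abs_nonneg k)
      have hwabs : |w| = w := abs_of_nonneg hw0
      have hwz : |w| ≤ |z| := by rw [hwabs, hzabs]; exact inf_le_left
      have hwL : w ∈ L := disjComp_solid hzL hwz
      have hwP : w ∈ P := by
        rcases hP with rfl | rfl
        · rw [hKeq]
          refine disjComp_solid ?_ (by rw [hwabs]; exact inf_le_right : |w| ≤ |k|)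
          rw [hKeq] at hk; exact hk
        · rw [hNeq]
          refine disjComp_solid ?_ (by rw [hwabs]; exact inf_le_right : |w| ≤ |k|)
          rw [hNeq] at hk; exact hk
      have hzw : |z| ⊓ |w| = 0 := by
        rcases hP with rfl | rfl
        · exact hzperp w (Or.inl ⟨hwL, hwP⟩)
        · exact hzperp w (Or.inr ⟨hwL, hwP⟩)
      have : w = 0 := by
        have hwle : w ≤ |z| ⊓ |w| := le_inf (by rw [← hwabs]; exact hwz) (le_abs_self w)
        have := hwle.trans_eq hzw
        exact le_antisymm this hw0
      rw [hzabs]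
      simpa [hwdef] using this
    have hzKperp : z ∈ disjComp (K ∪ N) := by
      rintro k (hk | hk)
      · exact key K (Or.inl rfl) k hk
      · exact key N (Or.inr rfl) k hk
    have : |z| ⊓ |z| = 0 := hzKN z hzKperp
    have hz : z = 0 := by
      rw [inf_idem, hzabs] at this
      exact this
    rw [hzdef] at hz
    exact hz
  · -- easy direction
    have hsub : (L ∩ K) ∪ (L ∩ N) ⊆ L ∩ disjComp (disjComp (K ∪ N)) := by
      rintro x (⟨hxL, hxK⟩ | ⟨hxL, hxN⟩)
      · exact ⟨hxL, subset_disjComp_disjComp (K ∪ N) (Or.inl hxK)⟩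
      · exact ⟨hxL, subset_disjComp_disjComp (K ∪ N) (Or.inr hxN)⟩
    have hband : L ∩ disjComp (disjComp (K ∪ N)) =
        disjComp (ML ∪ disjComp (K ∪ N)) :=
      (disjComp_union ML (disjComp (K ∪ N))).symm
    calc disjComp (disjComp ((L ∩ K) ∪ (L ∩ N)))
        ⊆ disjComp (disjComp (disjComp (ML ∪ disjComp (K ∪ N)))) := by
          apply disjComp_anti; apply disjComp_anti
          rw [← hband]; exact hsub
      _ = disjComp (ML ∪ disjComp (K ∪ N)) := disjComp_triple _
      _ = L ∩ disjComp (disjComp (K ∪ N)) := hband.symm
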